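/- Let X be a normed space, F ⊆ X nonempty closed convex, Q ⊆ X nonempty convex, and x̄ ∈ Q. Then the convex subdifferential of T_Q^F at x̄ equals N(x̄; Q) ∩ C*, where N(x̄; Q) = {x* ∈ X* : ⟨x*, x − x̄⟩ ≤ 0 for all x ∈ Q} and C* = {x* ∈ X* : sup_{f∈F} ⟨−x*, f⟩ ≤ 1}. -/

import Mathlib

open scoped ENNReal Pointwise

/-- The minimal time function `T_Q^F`. -/
noncomputable def minTime {X : Type*} [NormedAddCommGroup X] [NormedSpace ℝ X]
    (F Q : Set X) (x : X) : ℝ≥0∞ :=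
  sInf (ENNReal.ofReal '' {t : ℝ | 0 ≤ t ∧ ∃ f ∈ F, x + t • f ∈ Q})

theorem subdiff_minTime_at_mem {X : Type*} [NormedAddCommGroup X] [NormedSpace ℝ X]
    (F : Set X) (hFne : F.Nonempty) (hFcl : IsClosed F) (hFconv : Convex ℝ F)
    (Q : Set X) (hQne : Q.Nonempty) (hQconv : Convex ℝ Q)
    (xbar : X) (hxbar : xbar ∈ Q) :
    {x' : X →L[ℝ] ℝ | ∀ x : X,
        ENNReal.ofReal (x' (x - xbar)) + minTime F Q xbar ≤ minTime F Q x} =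
      {x' : X →L[ℝ] ℝ | ∀ x ∈ Q, x' (x - xbar) ≤ 0} ∩
      {x' : X →L[ℝ] ℝ | ∀ f ∈ F, (-x') f ≤ 1} := by
  have hzero : ∀ y ∈ Q, minTime F Q y = 0 := by
    intro y hy
    refine le_antisymm ?_ zero_le
    obtain ⟨f, hf⟩ := hFne
    have : (0 : ℝ≥0∞) ∈ ENNReal.ofReal '' {t : ℝ | 0 ≤ t ∧ ∃ f ∈ F, y + t • f ∈ Q} :=
      ⟨0, ⟨le_refl 0, f, hf, by simpa using hy⟩, by simp⟩
    exact sInf_le this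
  ext x'
  simp only [Set.mem_setOf_eq, Set.mem_inter_iff, hzero xbar hxbar, add_zero]
  constructor
  · intro h
    constructor
    · intro x hx
      have hx0 := h x
      rw [hzero x hx] at hx0
      exact ENNReal.ofReal_eq_zero.mp (le_antisymm hx0 zero_le)
    · intro f hf
      have hle : minTime F Q (xbar - f) ≤ ENNReal.ofReal 1 :=
        sInf_le ⟨1, ⟨zero_le_one, f, hf, by simp [hxbar]⟩, rfl⟩
      have h1 := (h (xbar - f)).trans hle
      have h2 : x' (xbar - f - xbar) ≤ 1 := by
        by_contra hc
        push_neg at hc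
        have := (ENNReal.ofReal_le_ofReal_iff (by linarith)).mp h1
        linarith
      simpa using h2
  · rintro ⟨hN, hC⟩ x
    refine le_sInf ?_
    rintro t ⟨s, ⟨hs0, f, hf, hsf⟩, rfl⟩
    apply ENNReal.ofReal_le_ofReal
    have h1 := hN _ hsf
    have h2 : -(x' f) ≤ 1 := by simpa using hC f hf
    have h3 : x' (x + s • f - xbar) = x' (x - xbar) + s * x' f := by
      rw [show x + s • f - xbar = (x - xbar) + s • f by abel]
      simp
    nlinarith [mul_nonneg hs0 (by linarith : (0:ℝ) ≤ 1 + x' f)]
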